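/- For the chain of N+1 free particles with potential energy U = −f x_0 + (ω₀²/2) x_0² + (ω₀²/2)(x_N − L)² + (ω₁²/2) Σ_{i=1}^{N} (x_i − x_{i−1} − a)², the unique equilibrium configuration satisfies 0 ≤ x_0 < x_1 < ... < x_N ≤ L if and only if L ≥ aN and −ω₁²(L − aN)/(N + ω₁²ω₀^{−2}) ≤ f ≤ ω₀²(L − Na). -/

import Mathlib

set_option maxHeartbeats 1000000 in
theorem stmt5 (N : ℕ) (hN : 1 ≤ N) (L a f ω0 ω1 : ℝ)
    (hL : 0 < L) (ha : 0 < a) (hω0 : 0 < ω0) (hω1 : 0 < ω1)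
    (X : ℕ → ℝ)
    -- the unique equilibrium configuration of the free chain with force f on particle 0
    (hX : ∀ k, X k =
      (ω1 ^ 2 * (L + N * (f / ω1 ^ 2 - a)) + ω1 ^ 2 / ω0 ^ 2 * f)
          / (2 * ω1 ^ 2 + N * ω0 ^ 2)
        + k * ((ω0 ^ 2 * L + 2 * ω1 ^ 2 * a - f) / (2 * ω1 ^ 2 + N * ω0 ^ 2))) :
    -- 0 ≤ x_0 < x_1 < … < x_N ≤ L iff L ≥ aN and the bounds on f hold
    (0 ≤ X 0 ∧ (∀ k < N, X k < X (k + 1)) ∧ X N ≤ L) ↔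
      (a * N ≤ L ∧
        -(ω1 ^ 2 * (L - a * N)) / (N + ω1 ^ 2 / ω0 ^ 2) ≤ f ∧
        f ≤ ω0 ^ 2 * (L - N * a)) := by
  have hω0' : (0:ℝ) < ω0 ^ 2 := by positivity
  have hω1' : (0:ℝ) < ω1 ^ 2 := by positivity
  have hD : (0:ℝ) < 2 * ω1 ^ 2 + (N:ℝ) * ω0 ^ 2 := by positivity
  have hM : (0:ℝ) < (N:ℝ) + ω1 ^ 2 / ω0 ^ 2 := by positivity
  have hNR : (1:ℝ) ≤ (N:ℝ) := by exact_mod_cast hN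
  have hDM : (0:ℝ) < (2 * ω1 ^ 2 + (N:ℝ) * ω0 ^ 2) * ω0 ^ 2 := by positivity
  -- key equalities
  have eq0 : X 0 * ((2 * ω1 ^ 2 + (N:ℝ) * ω0 ^ 2) * ω0 ^ 2)
      = f * ((N:ℝ) * ω0 ^ 2 + ω1 ^ 2) + ω0 ^ 2 * ω1 ^ 2 * (L - a * N) := by
    rw [hX]; push_cast; field_simp; ring
  have eqN : (X N - L) * ((2 * ω1 ^ 2 + (N:ℝ) * ω0 ^ 2) * ω0 ^ 2)
      = ω1 ^ 2 * (f - ω0 ^ 2 * (L - (N:ℝ) * a)) := by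
    rw [hX]; field_simp; ring
  have hMmul : ((N:ℝ) + ω1 ^ 2 / ω0 ^ 2) * ω0 ^ 2 = (N:ℝ) * ω0 ^ 2 + ω1 ^ 2 := by
    field_simp
  -- x0 nonneg iff lower bound on f
  have key0 : (0 ≤ X 0) ↔
      -(ω1 ^ 2 * (L - a * N)) / ((N:ℝ) + ω1 ^ 2 / ω0 ^ 2) ≤ f := by
    have hiff : (-(ω1 ^ 2 * (L - a * (N:ℝ))) ≤ f * ((N:ℝ) + ω1 ^ 2 / ω0 ^ 2)) ↔
        (-(ω1 ^ 2 * (L - a * (N:ℝ))) * ω0 ^ 2 ≤ f * ((N:ℝ) * ω0 ^ 2 + ω1 ^ 2)) := by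
      rw [← hMmul, ← mul_assoc]
      exact (mul_le_mul_iff_of_pos_right hω0').symm
    rw [div_le_iff₀ hM, hiff]
    constructor
    · intro h
      have h2 : 0 ≤ X 0 * ((2 * ω1 ^ 2 + (N:ℝ) * ω0 ^ 2) * ω0 ^ 2) :=
        mul_nonneg h hDM.le
      rw [eq0] at h2
      nlinarith
    · intro h
      have h3 : 0 ≤ X 0 * ((2 * ω1 ^ 2 + (N:ℝ) * ω0 ^ 2) * ω0 ^ 2) := by
        rw [eq0]; nlinarith
      exact nonneg_of_mul_nonneg_right (by linarith [h3] : 0 ≤ (2 * ω1 ^ 2 + (N:ℝ) * ω0 ^ 2) * ω0 ^ 2 * X 0) hDM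
  -- xN ≤ L iff upper bound on f
  have keyN : (X N ≤ L) ↔ f ≤ ω0 ^ 2 * (L - (N:ℝ) * a) := by
    constructor
    · intro h
      have h2 : (X N - L) * ((2 * ω1 ^ 2 + (N:ℝ) * ω0 ^ 2) * ω0 ^ 2) ≤ 0 :=
        mul_nonpos_of_nonpos_of_nonneg (by linarith) hDM.le
      rw [eqN] at h2
      nlinarith
    · intro h
      have h2 : (X N - L) * ((2 * ω1 ^ 2 + (N:ℝ) * ω0 ^ 2) * ω0 ^ 2) ≤ 0 := by
        rw [eqN]; nlinarith
      nlinarith [hDM]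
  -- monotone iff slope positive
  have hstep : ∀ k : ℕ, X (k + 1) - X k
      = (ω0 ^ 2 * L + 2 * ω1 ^ 2 * a - f) / (2 * ω1 ^ 2 + (N:ℝ) * ω0 ^ 2) := by
    intro k; rw [hX, hX]; push_cast; ring
  have keymono : (∀ k < N, X k < X (k + 1)) ↔ f < ω0 ^ 2 * L + 2 * ω1 ^ 2 * a := by
    constructor
    · intro h
      have h1 := h 0 hN
      have h2 := hstep 0
      have h3 : (0:ℝ) < (ω0 ^ 2 * L + 2 * ω1 ^ 2 * a - f) / (2 * ω1 ^ 2 + (N:ℝ) * ω0 ^ 2) := by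
        linarith
      rw [lt_div_iff₀ hD, zero_mul] at h3
      linarith
    · intro h k hk
      have h2 := hstep k
      have h3 : (0:ℝ) < (ω0 ^ 2 * L + 2 * ω1 ^ 2 * a - f) / (2 * ω1 ^ 2 + (N:ℝ) * ω0 ^ 2) :=
        div_pos (by linarith) hD
      linarith
  constructor
  · rintro ⟨h0, hm, hNle⟩
    have hf1 := key0.mp h0
    have hf2 := keyN.mp hNle
    refine ⟨?_, hf1, hf2⟩
    rw [div_le_iff₀ hM] at hf1
    have h5 : -(ω1 ^ 2 * (L - a * N)) ≤ ω0 ^ 2 * (L - (N:ℝ) * a) * ((N:ℝ) + ω1 ^ 2 / ω0 ^ 2) :=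
      le_trans hf1 (mul_le_mul_of_nonneg_right hf2 hM.le)
    have h6 := mul_le_mul_of_nonneg_right h5 hω0'.le
    rw [mul_assoc, hMmul] at h6
    have hC : (0:ℝ) < ω0 ^ 2 * ω1 ^ 2 + ω0 ^ 2 * ((N:ℝ) * ω0 ^ 2 + ω1 ^ 2) := by positivity
    have h7 : 0 ≤ (ω0 ^ 2 * ω1 ^ 2 + ω0 ^ 2 * ((N:ℝ) * ω0 ^ 2 + ω1 ^ 2)) * (L - a * N) := by
      nlinarith [h6]
    have h8 := nonneg_of_mul_nonneg_right h7 hC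
    linarith
  · rintro ⟨hLa, hf1, hf2⟩
    refine ⟨key0.mpr hf1, keymono.mpr ?_, keyN.mpr hf2⟩
    have hp1 : (0:ℝ) < ω1 ^ 2 * a := mul_pos hω1' ha
    have hp2 : (0:ℝ) ≤ ω0 ^ 2 * ((N:ℝ) * a) :=
      mul_nonneg hω0'.le (mul_nonneg (by linarith) ha.le)
    nlinarith [hp1, hp2]
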